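/- Let X be a copositive p×p matrix and P̄ ⊆ {1,…,p} a nonempty set such that X(P̄) has rank |P̄| − 1 and there exists t̄ > 0 with X(P̄)t̄ = 0. Then for every i ∈ P̄, the principal submatrix X(P̄∖{i}) is nonsingular, i.e. det X(P̄∖{i}) ≠ 0. -/

import Mathlib

open Matrix BigOperators

def Copositive {p : ℕ} (X : Matrix (Fin p) (Fin p) ℝ) : Prop :=
  ∀ t : Fin p → ℝ, (∀ k, 0 ≤ t k) → 0 ≤ t ⬝ᵥ X.mulVec t

def principalSub {p : ℕ} (X : Matrix (Fin p) (Fin p) ℝ) (Q : Finset (Fin p)) :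
    Matrix {k // k ∈ Q} {k // k ∈ Q} ℝ :=
  X.submatrix (fun i => (i : Fin p)) (fun j => (j : Fin p))

/-- Extension of a vector on a subset by zero. -/
def extZero {p : ℕ} (Q : Finset (Fin p)) (v : {k // k ∈ Q} → ℝ) : Fin p → ℝ :=
  fun j => if h : j ∈ Q then v ⟨j, h⟩ else 0

lemma sum_extZero {p : ℕ} (Q : Finset (Fin p)) (f : Fin p → ℝ)
    (hf : ∀ j ∉ Q, f j = 0) : ∑ j, f j = ∑ j : {k // k ∈ Q}, f j := by
  rw [Finset.sum_coe_sort Q f]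
  exact (Finset.sum_subset (Finset.subset_univ Q) (fun x _ hx => hf x hx)).symm

lemma qform_extZero {p : ℕ} (X : Matrix (Fin p) (Fin p) ℝ) (Q : Finset (Fin p))
    (v : {k // k ∈ Q} → ℝ) :
    extZero Q v ⬝ᵥ X.mulVec (extZero Q v) = v ⬝ᵥ (principalSub X Q).mulVec v := by
  unfold dotProduct
  rw [sum_extZero Q _ (fun j hj => by simp [extZero, hj])]
  refine Finset.sum_congr rfl fun j _ => ?_
  have h1 : extZero Q v (j : Fin p) = v j := by simp [extZero]
  rw [h1]
  congr 1
  show (X.mulVec (extZero Q v)) (j : Fin p) = (principalSub X Q).mulVec v j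
  unfold Matrix.mulVec dotProduct
  rw [sum_extZero Q _ (fun k hk => by simp [extZero, hk])]
  refine Finset.sum_congr rfl fun k _ => ?_
  simp [extZero, principalSub]

theorem det_erase_ne_zero {p : ℕ} (X : Matrix (Fin p) (Fin p) ℝ)
    (hX : X.IsSymm) (hcop : Copositive X) (Q : Finset (Fin p)) (hQ : Q.Nonempty)
    (hrank : (principalSub X Q).rank = Q.card - 1)
    (tbar : {k // k ∈ Q} → ℝ) (htpos : ∀ k, 0 < tbar k)
    (htker : (principalSub X Q).mulVec tbar = 0) :
    ∀ i ∈ Q, (principalSub X (Q.erase i)).det ≠ 0 := by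
  classical
  set A := principalSub X Q with hA
  haveI : Nonempty {k // k ∈ Q} := ⟨⟨hQ.choose, hQ.choose_spec⟩⟩
  have hAsymm : A.IsSymm := hX.submatrix _
  -- tbar ⬝ᵥ A *ᵥ y = 0 for all y
  have htA : ∀ y : {k // k ∈ Q} → ℝ, tbar ⬝ᵥ A.mulVec y = 0 := by
    intro y
    rw [dotProduct_mulVec, ← hAsymm.eq, vecMul_transpose, htker, zero_dotProduct]
  -- A is positive semidefinite
  have hpsd : A.PosSemidef := by
    rw [posSemidef_iff_dotProduct_mulVec]
    constructor
    · rw [Matrix.IsHermitian, conjTranspose_eq_transpose_of_trivial, hAsymm.eq]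
    · intro y
      simp only [RCLike.star_def, starRingEnd_apply, star_trivial]
      -- choose small ε
      set m := Finset.univ.inf' Finset.univ_nonempty tbar with hm
      set M := Finset.univ.sup' Finset.univ_nonempty (fun k => |y k|) with hM
      have hmpos : 0 < m := by
        rw [hm, Finset.lt_inf'_iff]
        exact fun k _ => htpos k
      have hM0 : 0 ≤ M := by
        rw [hM]
        exact le_trans (abs_nonneg _)
          (Finset.le_sup' (fun k => |y k|) (Finset.mem_univ (Classical.arbitrary _)))
      set ε := m / (M + 1) with hε
      have hεpos : 0 < ε := div_pos hmpos (by linarith)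
      have hnn : ∀ k, 0 ≤ tbar k + ε * y k := by
        intro k
        have h1 : m ≤ tbar k := Finset.inf'_le _ (Finset.mem_univ k)
        have h2 : |y k| ≤ M := by
          rw [hM]; exact Finset.le_sup' (fun k => |y k|) (Finset.mem_univ k)
        have h3 : -(|y k|) ≤ y k := neg_abs_le _
        have h4 : ε * (M + 1) = m := by
          rw [hε]; field_simp
        nlinarith [hεpos.le]
      have hcp := hcop (extZero Q (tbar + ε • y)) (by
        intro j
        unfold extZero
        by_cases h : j ∈ Q
        · simpa [h] using hnn ⟨j, h⟩
        · simp [h])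
      rw [qform_extZero] at hcp
      have hexp : (tbar + ε • y) ⬝ᵥ A.mulVec (tbar + ε • y)
          = ε * ε * (y ⬝ᵥ A.mulVec y) := by
        rw [Matrix.mulVec_add, Matrix.mulVec_smul, htker, add_dotProduct]
        simp only [zero_add, dotProduct_smul, smul_dotProduct, smul_eq_mul, htA]
        ring
      rw [hexp] at hcp
      nlinarith [hcp, hεpos, mul_pos hεpos hεpos]
  -- kernel of A has dimension 1
  have hcard : Fintype.card {k // k ∈ Q} = Q.card := Fintype.card_coe Q
  have hrn := LinearMap.finrank_range_add_finrank_ker A.mulVecLin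
  have hfr : Module.finrank ℝ ({k // k ∈ Q} → ℝ) = Q.card := by
    rw [Module.finrank_pi, hcard]
  have hrankA : Module.finrank ℝ (LinearMap.range A.mulVecLin) = Q.card - 1 := hrank
  have hQ1 : 1 ≤ Q.card := hQ.card_pos
  have hker1 : Module.finrank ℝ (LinearMap.ker A.mulVecLin) = 1 := by
    rw [hfr, hrankA] at hrn; omega
  -- tbar is in the kernel and nonzero
  have htmem : tbar ∈ LinearMap.ker A.mulVecLin := by
    rw [LinearMap.mem_ker, Matrix.mulVecLin_apply]; exact htker
  have htne : (⟨tbar, htmem⟩ : LinearMap.ker A.mulVecLin) ≠ 0 := by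
    intro h
    have h2 : tbar = 0 := by simpa using congrArg Subtype.val h
    exact absurd (congrFun h2 ⟨hQ.choose, hQ.choose_spec⟩) (ne_of_gt (htpos _))
  have hspan := (finrank_eq_one_iff_of_nonzero' (⟨tbar, htmem⟩ :
    LinearMap.ker A.mulVecLin) htne).mp hker1
  -- main argument
  intro i hi hdet
  obtain ⟨w, hw0, hwker⟩ := (Matrix.exists_mulVec_eq_zero_iff).mpr hdet
  set wt : {k // k ∈ Q} → ℝ :=
    fun j => if h : (j : Fin p) ∈ Q.erase i then w ⟨j, h⟩ else 0 with hwt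
  have hext : extZero Q wt = extZero (Q.erase i) w := by
    funext j
    unfold extZero
    by_cases h : j ∈ Q.erase i
    · have hjQ : j ∈ Q := Finset.mem_of_mem_erase h
      rw [dif_pos hjQ, dif_pos h]
      simp only [hwt]
      rw [dif_pos h]
    · rw [dif_neg h]
      by_cases hjQ : j ∈ Q
      · rw [dif_pos hjQ]
        simp only [hwt]
        rw [dif_neg h]
      · rw [dif_neg hjQ]
  have hq0 : wt ⬝ᵥ A.mulVec wt = 0 := by
    rw [← qform_extZero, hext, qform_extZero, hwker, dotProduct_zero]
  have hwtker : A.mulVec wt = 0 := by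
    have := (hpsd.dotProduct_mulVec_zero_iff wt).mp (by simpa using hq0)
    exact this
  have hwtmem : wt ∈ LinearMap.ker A.mulVecLin := by
    rw [LinearMap.mem_ker, Matrix.mulVecLin_apply]; exact hwtker
  obtain ⟨c, hc⟩ := hspan ⟨wt, hwtmem⟩
  have hc' : c • tbar = wt := congrArg Subtype.val hc
  have hci : wt ⟨i, hi⟩ = 0 := by simp [hwt]
  have hc0 : c = 0 := by
    have := congrFun hc' ⟨i, hi⟩
    rw [hci] at this
    simp only [Pi.smul_apply, smul_eq_mul] at this
    exact (mul_eq_zero.mp this).resolve_right (ne_of_gt (htpos _))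
  have hwtzero : wt = 0 := by rw [← hc', hc0, zero_smul]
  apply hw0
  funext k
  have hkQ : (k : Fin p) ∈ Q := Finset.mem_of_mem_erase k.2
  have h1 : wt ⟨(k : Fin p), hkQ⟩ = w k := by
    simp only [hwt]
    rw [dif_pos k.2]
  rw [hwtzero] at h1
  exact h1.symm
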